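/- Let G_* be the subgroup functor of Γ₁ over ℤ defined by G_*(A) = { (1 + a₁) w : a₁ ∈ N(A) } for every commutative ring A. Then G_*(A) is a subgroup of Γ₁(A) under composition of power series, and G_* is isomorphic as a group functor to the formal multiplicative group Ĝ_m, i.e. G_*(A) ≅ (1 + N(A), ·) naturally in A. -/

import Mathlib

open PowerSeries

/-- Membership in `Γ₁(A)`: a power series `φ ∈ A⟦w⟧` with `φ ≡ w mod N(A)⟦w⟧`. -/
def InGamma1 {A : Type*} [CommRing A] (φ : PowerSeries A) : Prop :=
  ∀ d : ℕ, PowerSeries.coeff d (φ - PowerSeries.X) ∈ nilradical A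

/-- `χ = φ ∘ ψ` is the composite (substitution of `ψ` into `φ`): coefficientwise,
`coeff_d χ = Σ_j coeff_j φ · coeff_d (ψ^j)`, the sum being coefficientwise eventually
constant. -/
def IsComp1 {A : Type*} [CommRing A] (φ ψ χ : PowerSeries A) : Prop :=
  ∀ d : ℕ, ∃ M : ℕ, ∀ m ≥ M,
    PowerSeries.coeff d χ =
      ∑ j ∈ Finset.range m, PowerSeries.coeff j φ * PowerSeries.coeff d (ψ ^ j)


lemma comp_linear {A : Type*} [CommRing A] (a b : A) :
    IsComp1 (C a * X) (C b * X) (C (a * b) * X) := by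
  intro d
  refine ⟨2, fun m hm => ?_⟩
  have : ∀ j : ℕ, (C b * X) ^ j = C (b ^ j) * X ^ j := by
    intro j; rw [mul_pow, ← map_pow]
  rw [Finset.sum_eq_single 1]
  · simp only [this, pow_one, map_mul, mul_assoc, coeff_C_mul, coeff_X]
    split <;> simp
  · intro j _ hj
    simp [coeff_C_mul, coeff_X, hj]
  · intro h; simp at h; omega

/-- `G_*(A) = { (1 + a₁)·w : a₁ ∈ N(A) }` is a subgroup of `Γ₁(A)` under
composition of power series, and `G_*` is isomorphic, naturally in `A`, to the formal
multiplicative group `Ĝ_m : A ↦ (1 + N(A), ·)`, via `1 + a₁ ↦ (1 + a₁)·w`. -/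
theorem Gstar_subgroup_and_iso_formal_multiplicative_group
    (A : Type*) [CommRing A] :
    -- `G_*(A) ⊆ Γ₁(A)`, and it contains the identity `w`
    (∀ a ∈ nilradical A, InGamma1 (PowerSeries.C (1 + a) * PowerSeries.X)) ∧
    ((0 : A) ∈ nilradical A ∧ PowerSeries.C ((1 : A) + 0) * PowerSeries.X =
      (PowerSeries.X : PowerSeries A)) ∧
    -- closure under composition, realizing multiplication on `1 + N(A)`
    (∀ a ∈ nilradical A, ∀ b ∈ nilradical A,
      a + b + a * b ∈ nilradical A ∧
      (1 + a) * (1 + b) = 1 + (a + b + a * b) ∧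
      IsComp1 (PowerSeries.C (1 + a) * PowerSeries.X)
        (PowerSeries.C (1 + b) * PowerSeries.X)
        (PowerSeries.C ((1 + a) * (1 + b)) * PowerSeries.X)) ∧
    -- inverses
    (∀ a ∈ nilradical A, ∃ b ∈ nilradical A, (1 + a) * (1 + b) = 1 ∧
      IsComp1 (PowerSeries.C (1 + a) * PowerSeries.X)
        (PowerSeries.C (1 + b) * PowerSeries.X) PowerSeries.X ∧
      IsComp1 (PowerSeries.C (1 + b) * PowerSeries.X)
        (PowerSeries.C (1 + a) * PowerSeries.X) PowerSeries.X) ∧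
    -- the parametrization `1 + a₁ ↦ (1 + a₁)w` is injective (so it is a group
    -- isomorphism `(1 + N(A), ·) ≅ G_*(A)`)
    (∀ a ∈ nilradical A, ∀ b ∈ nilradical A,
      PowerSeries.C (1 + a) * PowerSeries.X = PowerSeries.C (1 + b) * PowerSeries.X →
        a = b) ∧
    -- naturality in `A`
    (∀ (B : Type) [CommRing B] (f : A →+* B), ∀ a ∈ nilradical A,
      f a ∈ nilradical B ∧
      PowerSeries.map f (PowerSeries.C (1 + a) * PowerSeries.X) =
        PowerSeries.C (1 + f a) * PowerSeries.X) := by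
  refine ⟨?_, ⟨zero_mem _, by simp⟩, ?_, ?_, ?_, ?_⟩
  · intro a ha d
    have h1 : C (1 + a) * X - X = C a * X := by
      rw [map_add, map_one, add_mul, one_mul, add_sub_cancel_left]
    rw [h1, coeff_C_mul, coeff_X]
    split
    · simpa using ha
    · rw [mul_zero]; exact zero_mem _
  · intro a ha b hb
    refine ⟨?_, by ring, comp_linear _ _⟩
    exact add_mem (add_mem ha hb) (Ideal.mul_mem_right _ _ ha)
  · intro a ha
    have hn : IsNilpotent a := ha
    have hu : IsUnit ((1 : A) + a) := hn.isUnit_one_add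
    refine ⟨(↑hu.unit⁻¹ : A) - 1, ?_, ?_, ?_, ?_⟩
    · have hb : ((↑hu.unit⁻¹ : A) - 1) = (↑hu.unit⁻¹ : A) * (-a) := by
        have h1 : (↑hu.unit⁻¹ : A) * (1 + a) = 1 := hu.val_inv_mul
        calc (↑hu.unit⁻¹ : A) - 1 = (↑hu.unit⁻¹ : A) - (↑hu.unit⁻¹ : A) * (1 + a) := by
              rw [h1]
          _ = (↑hu.unit⁻¹ : A) * (-a) := by ring
      rw [hb]
      exact Ideal.mul_mem_left _ _ (neg_mem ha)
    · have : (1 : A) + ((↑hu.unit⁻¹ : A) - 1) = (↑hu.unit⁻¹ : A) := by ring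
      rw [this]; exact hu.mul_val_inv
    · have h1 : (1 + a) * (1 + ((↑hu.unit⁻¹ : A) - 1)) = 1 := by
        have : (1 : A) + ((↑hu.unit⁻¹ : A) - 1) = (↑hu.unit⁻¹ : A) := by ring
        rw [this]; exact hu.mul_val_inv
      have := comp_linear (A := A) (1 + a) (1 + ((↑hu.unit⁻¹ : A) - 1))
      rwa [h1, map_one, one_mul] at this
    · have h1 : (1 + ((↑hu.unit⁻¹ : A) - 1)) * (1 + a) = 1 := by
        have : (1 : A) + ((↑hu.unit⁻¹ : A) - 1) = (↑hu.unit⁻¹ : A) := by ring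
        rw [this]; exact hu.val_inv_mul
      have := comp_linear (A := A) (1 + ((↑hu.unit⁻¹ : A) - 1)) (1 + a)
      rwa [h1, map_one, one_mul] at this
  · intro a _ b _ h
    have := congrArg (coeff 1) h
    simpa [coeff_C_mul, coeff_X] using this
  · intro B _ f a ha
    refine ⟨?_, by simp⟩
    rw [mem_nilradical] at ha ⊢
    exact ha.map f
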